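/- Let v₃(θ) be defined by v₃(0) = 0 and v₃'(θ) = λ₁ cos θ sin θ (cos θ · v₂'(θ) + 2 sin θ · v₂(θ)) + λ₂ cos²θ sin²θ, where v₂(θ) = λ₁ ∫₀^θ cos s sin² s ds. Then v₃(2π) = c₃ λ₂ where c₃ = ∫₀^{2π} cos²θ sin²θ dθ = π/4 ≠ 0. -/

import Mathlib

open Real

lemma hid (θ : ℝ) : (cos θ)^2 * (sin θ)^2 = 1/8 - cos (4*θ)/8 := by
  have h1 : cos (4*θ) = 2 * cos (2*θ)^2 - 1 := by
    rw [show (4:ℝ)*θ = 2*(2*θ) by ring, cos_two_mul]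
  rw [h1, cos_two_mul]
  have h2 := sin_sq_add_cos_sq θ
  linear_combination (cos θ)^2 * h2

lemma sin8pi : Real.sin (4*(2*π)) = 0 := by
  rw [show (4:ℝ)*(2*π) = (8:ℕ)*π by push_cast; ring, Real.sin_nat_mul_pi]

lemma hc3 : (∫ θ in (0:ℝ)..(2*π), (cos θ)^2 * (sin θ)^2) = π/4 := by
  have key : ∀ θ ∈ Set.uIcc (0:ℝ) (2*π),
      HasDerivAt (fun t : ℝ => t/8 - sin (4*t)/32) ((cos θ)^2*(sin θ)^2) θ := by
    intro θ _
    have hs : HasDerivAt (fun t : ℝ => sin (4*t)) (cos (4*θ)*4) θ :=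
      (Real.hasDerivAt_sin (4*θ)).comp θ (by simpa using (hasDerivAt_id θ).const_mul 4)
    have h : HasDerivAt (fun t : ℝ => t/8 - sin (4*t)/32) (1/8 - (cos (4*θ)*4)/32) θ :=
      ((hasDerivAt_id θ).div_const 8).sub (hs.div_const 32)
    convert h using 1
    rw [hid θ]; ring
  rw [intervalIntegral.integral_eq_sub_of_hasDerivAt key
    (Continuous.intervalIntegrable (by continuity) _ _)]
  simp [sin8pi]
  ring

/-- With `v₂ θ = λ₁ ∫₀^θ cos s sin² s ds`, `v₃ 0 = 0` and
`v₃' θ = λ₁ cos θ sin θ (cos θ · v₂' θ + 2 sin θ · v₂ θ) + λ₂ cos²θ sin²θ`,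
one has `v₃ (2π) = c₃ λ₂` where `c₃ = ∫₀^{2π} cos²θ sin²θ dθ = π/4 ≠ 0`. -/
theorem v3_at_two_pi (lam₁ lam₂ : ℝ) (v₂ v₃ : ℝ → ℝ)
    (hv₂ : ∀ θ, v₂ θ = lam₁ * ∫ s in (0:ℝ)..θ, cos s * (sin s) ^ 2)
    (hv₃0 : v₃ 0 = 0)
    (hv₃ : ∀ θ, HasDerivAt v₃
      (lam₁ * cos θ * sin θ * (cos θ * deriv v₂ θ + 2 * sin θ * v₂ θ)
        + lam₂ * (cos θ) ^ 2 * (sin θ) ^ 2) θ) :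
    v₃ (2 * π) = (∫ θ in (0:ℝ)..(2 * π), (cos θ) ^ 2 * (sin θ) ^ 2) * lam₂ ∧
      (∫ θ in (0:ℝ)..(2 * π), (cos θ) ^ 2 * (sin θ) ^ 2) = π / 4 ∧
      (∫ θ in (0:ℝ)..(2 * π), (cos θ) ^ 2 * (sin θ) ^ 2) ≠ 0 := by
  have hint : ∀ θ : ℝ, (∫ s in (0:ℝ)..θ, cos s * (sin s)^2) = sin θ^3/3 := by
    intro θ
    have key : ∀ s ∈ Set.uIcc (0:ℝ) θ,
        HasDerivAt (fun t : ℝ => sin t^3/3) (cos s * (sin s)^2) s := by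
      intro s _
      have h := ((Real.hasDerivAt_sin s).fun_pow 3).div_const 3
      exact h.congr_deriv (by ring)
    rw [intervalIntegral.integral_eq_sub_of_hasDerivAt key
      (Continuous.intervalIntegrable (by continuity) _ _)]
    simp
  have hv₂fun : v₂ = fun θ => lam₁ * (sin θ^3/3) := funext fun θ => by
    rw [hv₂ θ, hint θ]
  have hdv₂ : ∀ θ, deriv v₂ θ = lam₁ * (cos θ * sin θ^2) := by
    intro θ
    rw [hv₂fun]
    have h : HasDerivAt (fun t : ℝ => lam₁ * (sin t^3/3)) (lam₁ * (cos θ * sin θ^2)) θ := by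
      have h2 := (((Real.hasDerivAt_sin θ).fun_pow 3).div_const 3).const_mul lam₁
      exact h2.congr_deriv (by ring)
    exact h.deriv
  set g : ℝ → ℝ := fun θ =>
    lam₁ * cos θ * sin θ * (cos θ * (lam₁ * (cos θ * sin θ^2)) + 2 * sin θ * (lam₁ * (sin θ^3/3)))
      + lam₂ * (cos θ)^2 * (sin θ)^2 with hg
  have hgcont : Continuous g := by rw [hg]; continuity
  have hv₃' : ∀ θ, HasDerivAt v₃ (g θ) θ := by
    intro θ
    have := hv₃ θ
    rw [hdv₂ θ, hv₂fun] at this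
    simpa [hg] using this
  have hgint : IntervalIntegrable g MeasureTheory.volume 0 (2*π) :=
    hgcont.intervalIntegrable _ _
  have e1 : (∫ θ in (0:ℝ)..(2*π), g θ) = v₃ (2*π) - v₃ 0 :=
    intervalIntegral.integral_eq_sub_of_hasDerivAt (fun θ _ => hv₃' θ) hgint
  have hH : ∀ θ ∈ Set.uIcc (0:ℝ) (2*π),
      HasDerivAt (fun t : ℝ => lam₁^2*(sin t^4/4 - sin t^6/18) + lam₂*(t/8 - sin (4*t)/32))
        (g θ) θ := by
    intro θ _
    have h1 : HasDerivAt (fun t : ℝ => lam₁^2*(sin t^4/4 - sin t^6/18))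
        (lam₁^2*((4*sin θ^(4-1)*cos θ)/4 - (6*sin θ^(6-1)*cos θ)/18)) θ :=
      ((((Real.hasDerivAt_sin θ).fun_pow 4).div_const 4).sub
        (((Real.hasDerivAt_sin θ).fun_pow 6).div_const 18)).const_mul (lam₁^2)
    have hs : HasDerivAt (fun t : ℝ => sin (4*t)) (cos (4*θ)*4) θ :=
      (Real.hasDerivAt_sin (4*θ)).comp θ (by simpa using (hasDerivAt_id θ).const_mul 4)
    have h2 : HasDerivAt (fun t : ℝ => lam₂*(t/8 - sin (4*t)/32))
        (lam₂*(1/8 - (cos (4*θ)*4)/32)) θ :=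
      (((hasDerivAt_id θ).div_const 8).sub (hs.div_const 32)).const_mul lam₂
    have h3 := h1.add h2
    refine h3.congr_deriv (Eq.symm ?_)
    have hq := hid θ
    have h2' := sin_sq_add_cos_sq θ
    simp only [hg]
    norm_num
    linear_combination (lam₁^2 * cos θ * sin θ^3) * h2' + lam₂ * hq
  have e2 : (∫ θ in (0:ℝ)..(2*π), g θ)
      = (lam₁^2*(sin (2*π)^4/4 - sin (2*π)^6/18) + lam₂*((2*π)/8 - sin (4*(2*π))/32))
        - (lam₁^2*(sin 0^4/4 - sin 0^6/18) + lam₂*(0/8 - sin (4*0)/32)) :=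
    intervalIntegral.integral_eq_sub_of_hasDerivAt hH hgint
  have hv3val : v₃ (2*π) = π/4 * lam₂ := by
    have := e1.symm.trans e2
    rw [hv₃0] at this
    rw [sub_zero] at this
    rw [this]
    simp [sin8pi, Real.sin_two_pi]
    ring
  refine ⟨?_, hc3, ?_⟩
  · rw [hc3, hv3val]
  · rw [hc3]
    positivity
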